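/- Fix integers n ≥ r ≥ 2, M > 0, an index i ∈ [n], and ρ ∈ (0, M]. For v ∈ {−1,+1}^n, let P_v denote the law of the r-uniform hypergraph β-model with parameter β_v = ρ v, and define the mixtures P_{+i} = (2/2^n) Σ_{v : v_i = +1} P_v and P_{−i} = (2/2^n) Σ_{v : v_i = −1} P_v. Then there exists a coupling (G_X, G_Y) of random hypergraphs with G_X ~ P_{+i} and G_Y ~ P_{−i} such that G_X and G_Y can disagree only on hyperedges containing vertex i, and E[d_H(G_X, G_Y)] ≤ (n−1 choose r−1) · ρ/2, where d_H(G_X, G_Y) is the number of r-element subsets of [n] present in exactly one of the two hypergraphs. -/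

import Mathlib

open MeasureTheory Finset
open scoped BigOperators ENNReal NNReal Classical

noncomputable section

/-- The type of potential hyperedges: `r`-element subsets of `[n]`. -/
abbrev Edge (n r : ℕ) := {e : Finset (Fin n) // e.card = r}

/-- An `r`-uniform hypergraph on `n` vertices, given by its hyperedge indicator. -/
abbrev HG (n r : ℕ) := Edge n r → Bool

/-- The logistic sigmoid `σ(t) = e^t / (1 + e^t)`. -/
def sigmoid (t : ℝ) : ℝ := Real.exp t / (1 + Real.exp t)

/-- The derivative of the sigmoid, `σ'(t) = e^t / (1 + e^t)^2`. -/
def sigmoid' (t : ℝ) : ℝ := Real.exp t / (1 + Real.exp t) ^ 2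

/-- The `r`-degree of vertex `i` in `G`: the number of hyperedges of `G` containing `i`. -/
def deg {n r : ℕ} (G : HG n r) (i : Fin n) : ℕ :=
  (Finset.univ.filter fun e : Edge n r => G e = true ∧ i ∈ e.1).card

/-- The probability of the hypergraph `G` under the `r`-uniform hypergraph β-model
with parameter `β`. -/
def hgWeight {n r : ℕ} (β : Fin n → ℝ) (G : HG n r) : ℝ :=
  ∏ e : Edge n r,
    if G e then sigmoid (∑ j ∈ e.1, β j) else 1 - sigmoid (∑ j ∈ e.1, β j)

/-- Membership in the sup-norm ball `B_{∞,M}`. -/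
def inBall {n : ℕ} (M : ℝ) (β : Fin n → ℝ) : Prop := ∀ i, |β i| ≤ M

/-- Two hypergraphs are adjacent if they differ in exactly one hyperedge. -/
def Adjacent {n r : ℕ} (G G' : HG n r) : Prop :=
  ∃ e : Edge n r, G e ≠ G' e ∧ ∀ f : Edge n r, f ≠ e → G f = G' f

/-- Probability mass function of the discrete Laplace distribution with parameter `α`. -/
def dLap (α : ℝ) (z : ℤ) : ℝ := ((1 - α) / (1 + α)) * α ^ z.natAbs

/-- Joint pmf of `n` i.i.d. discrete Laplace variables. -/
def dLapVec {n : ℕ} (α : ℝ) (z : Fin n → ℤ) : ℝ := ∏ i, dLap α (z i)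

/-- Real-valued indicator of a proposition. -/
def ind (p : Prop) : ℝ := if p then 1 else 0

/-- The ±1 vector associated with a Boolean sign pattern. -/
def signVec {n : ℕ} (s : Fin n → Bool) : Fin n → ℝ := fun j => if s j then 1 else -1

/-- The mixture pmf `P_{±i}` at a hypergraph `G`: the average of the β-model laws
`P_v` with `v = ρ·(±1)` signs, over all sign patterns with prescribed `i`-th sign. -/
def mixPMF (n r : ℕ) (ρ : ℝ) (i : Fin n) (b : Bool) (G : HG n r) : ℝ :=
  (2 / 2 ^ n) * ∑ s : Fin n → Bool, ind (s i = b) * hgWeight (fun j => ρ * signVec s j) G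

/-- Hamming distance between two hypergraphs: the number of hyperedges present in
exactly one of them. -/
def hamHG {n r : ℕ} (Gx Gy : HG n r) : ℕ :=
  (Finset.univ.filter fun e : Edge n r => Gx e ≠ Gy e).card


namespace S18

lemma sigmoid_pos (t : ℝ) : 0 < sigmoid t := by
  unfold sigmoid; positivity

lemma sigmoid_lt_one (t : ℝ) : sigmoid t < 1 := by
  unfold sigmoid
  rw [div_lt_one (by positivity)]
  linarith

lemma sigmoid_mono {a b : ℝ} (h : a ≤ b) : sigmoid a ≤ sigmoid b := by
  unfold sigmoid
  rw [div_le_div_iff₀ (by positivity) (by positivity)]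
  have hab : Real.exp a ≤ Real.exp b := Real.exp_le_exp.2 h
  nlinarith [Real.exp_pos a, Real.exp_pos b]

lemma hasDerivAt_sigmoid (t : ℝ) : HasDerivAt sigmoid (sigmoid' t) t := by
  have h1 : HasDerivAt Real.exp (Real.exp t) t := Real.hasDerivAt_exp t
  have h2 : HasDerivAt (fun u => 1 + Real.exp u) (Real.exp t) t := by
    exact h1.const_add 1
  have hne : (1 + Real.exp t) ≠ 0 := by positivity
  have h := h1.div h2 hne
  refine h.congr_deriv ?_
  rw [sigmoid']
  beta_reduce
  congr 1
  ring

lemma sigmoid'_bound (t : ℝ) : |sigmoid' t| ≤ 1/4 := by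
  have h0 : 0 ≤ sigmoid' t := by unfold sigmoid'; positivity
  rw [abs_of_nonneg h0]
  unfold sigmoid'
  rw [div_le_iff₀ (by positivity)]
  nlinarith [sq_nonneg (1 - Real.exp t), Real.exp_pos t]

lemma sigmoid_lip (a b : ℝ) : sigmoid b - sigmoid a ≤ |b - a| / 4 := by
  have key : ‖sigmoid b - sigmoid a‖ ≤ (1/4) * ‖b - a‖ := by
    apply Convex.norm_image_sub_le_of_norm_hasDerivWithin_le (f' := sigmoid')
      (fun x _ => (hasDerivAt_sigmoid x).hasDerivWithinAt)
      (fun x _ => by simpa using sigmoid'_bound x) convex_univ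
      (Set.mem_univ a) (Set.mem_univ b)
  rw [Real.norm_eq_abs, Real.norm_eq_abs] at key
  calc sigmoid b - sigmoid a ≤ |sigmoid b - sigmoid a| := le_abs_self _
    _ ≤ (1/4) * |b - a| := key
    _ = |b - a| / 4 := by ring

lemma ind_nonneg (P : Prop) : 0 ≤ ind P := by
  unfold ind; split <;> norm_num

variable {n r : ℕ}

/-- Edge success probability. -/
def pE (ρ : ℝ) (s : Fin n → Bool) (e : Edge n r) : ℝ :=
  sigmoid (∑ j ∈ e.1, ρ * signVec s j)

/-- Sign pattern with `i`-th coordinate forced to `false`. -/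
def flp {n : ℕ} (i : Fin n) (s : Fin n → Bool) : Fin n → Bool := Function.update s i false

lemma pE_flp_of_not_mem (ρ : ℝ) (i : Fin n) (s : Fin n → Bool) (e : Edge n r)
    (he : i ∉ e.1) : pE ρ (flp i s) e = pE ρ s e := by
  unfold pE flp
  congr 1
  refine Finset.sum_congr rfl fun j hj => ?_
  have hji : j ≠ i := fun h => he (h ▸ hj)
  simp [signVec, Function.update_of_ne hji]

lemma sum_flp_of_mem (ρ : ℝ) (i : Fin n) (s : Fin n → Bool) (e : Edge n r)
    (he : i ∈ e.1) :
    ∑ j ∈ e.1, ρ * signVec (flp i s) j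
      = (∑ j ∈ e.1, ρ * signVec s j) - ρ * (signVec s i + 1) := by
  rw [← Finset.add_sum_erase _ _ he, ← Finset.add_sum_erase _ (fun j => ρ * signVec s j) he]
  have h1 : ∑ j ∈ e.1.erase i, ρ * signVec (flp i s) j
      = ∑ j ∈ e.1.erase i, ρ * signVec s j := by
    refine Finset.sum_congr rfl fun j hj => ?_
    have hji : j ≠ i := Finset.ne_of_mem_erase hj
    simp [signVec, flp, Function.update_of_ne hji]
  rw [h1]
  have h2 : signVec (flp i s) i = -1 := by simp [signVec, flp]
  rw [h2]
  ring

lemma sv_mem (s : Fin n → Bool) (i : Fin n) : signVec s i = 1 ∨ signVec s i = -1 := by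
  unfold signVec; split <;> simp

lemma pE_flp_le (ρ : ℝ) (hρ0 : 0 < ρ) (i : Fin n) (s : Fin n → Bool) (e : Edge n r) :
    pE ρ (flp i s) e ≤ pE ρ s e := by
  by_cases he : i ∈ e.1
  · unfold pE
    apply sigmoid_mono
    rw [sum_flp_of_mem ρ i s e he]
    rcases sv_mem s i with h | h <;> rw [h] <;> nlinarith
  · rw [pE_flp_of_not_mem ρ i s e he]

lemma pE_gap (ρ : ℝ) (hρ0 : 0 < ρ) (i : Fin n) (s : Fin n → Bool) (e : Edge n r)
    (he : i ∈ e.1) : pE ρ s e - pE ρ (flp i s) e ≤ ρ / 2 := by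
  unfold pE
  rw [sum_flp_of_mem ρ i s e he]
  set T := ∑ j ∈ e.1, ρ * signVec s j
  have h := sigmoid_lip (T - ρ * (signVec s i + 1)) T
  have habs : |T - (T - ρ * (signVec s i + 1))| ≤ 2 * ρ := by
    rcases sv_mem s i with h' | h' <;> rw [h'] <;> rw [abs_le] <;>
      constructor <;> nlinarith
  linarith

/-- The per-edge coupling pmf on `Bool × Bool`. -/
def cpl (ρ : ℝ) (i : Fin n) (s : Fin n → Bool) (e : Edge n r) (x y : Bool) : ℝ :=
  if i ∈ e.1 then
    (if x then (if y then pE ρ (flp i s) e else pE ρ s e - pE ρ (flp i s) e)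
     else (if y then 0 else 1 - pE ρ s e))
  else (if x = y then (if x then pE ρ s e else 1 - pE ρ s e) else 0)

lemma cpl_nonneg (ρ : ℝ) (hρ0 : 0 < ρ) (i : Fin n) (s : Fin n → Bool) (e : Edge n r)
    (x y : Bool) : 0 ≤ cpl ρ i s e x y := by
  have h1 := sigmoid_pos (∑ j ∈ e.1, ρ * signVec s j)
  have h2 := sigmoid_lt_one (∑ j ∈ e.1, ρ * signVec s j)
  have h3 := sigmoid_pos (∑ j ∈ e.1, ρ * signVec (flp i s) j)
  have h4 := pE_flp_le ρ hρ0 i s e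
  unfold cpl pE at *
  split_ifs <;> first | linarith | norm_num

lemma cpl_offdiag (ρ : ℝ) (i : Fin n) (s : Fin n → Bool) (e : Edge n r)
    (he : i ∉ e.1) {x y : Bool} (hxy : x ≠ y) : cpl ρ i s e x y = 0 := by
  unfold cpl
  simp [he, hxy]

lemma cpl_sum_right (ρ : ℝ) (i : Fin n) (s : Fin n → Bool) (e : Edge n r) (x : Bool) :
    ∑ y, cpl ρ i s e x y = if x then pE ρ s e else 1 - pE ρ s e := by
  by_cases he : i ∈ e.1 <;> cases x <;>
    simp [cpl, he, Fintype.sum_bool]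

lemma cpl_sum_left (ρ : ℝ) (i : Fin n) (s : Fin n → Bool) (e : Edge n r) (y : Bool) :
    ∑ x, cpl ρ i s e x y = if y then pE ρ (flp i s) e else 1 - pE ρ (flp i s) e := by
  by_cases he : i ∈ e.1 <;> cases y <;>
    simp [cpl, he, Fintype.sum_bool, pE_flp_of_not_mem ρ i s e]

lemma cpl_total (ρ : ℝ) (i : Fin n) (s : Fin n → Bool) (e : Edge n r) :
    ∑ z : Bool × Bool, cpl ρ i s e z.1 z.2 = 1 := by
  rw [Fintype.sum_prod_type]
  have h : ∀ x : Bool, ∑ y, cpl ρ i s e x y = if x then pE ρ s e else 1 - pE ρ s e :=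
    cpl_sum_right ρ i s e
  rw [Fintype.sum_bool, h true, h false]
  simp

lemma cpl_dis_zero (ρ : ℝ) (i : Fin n) (s : Fin n → Bool) (e : Edge n r)
    (he : i ∉ e.1) : ∑ z : Bool × Bool, cpl ρ i s e z.1 z.2 * ind (z.1 ≠ z.2) = 0 := by
  apply Finset.sum_eq_zero
  intro z _
  by_cases hz : z.1 = z.2
  · simp [ind, hz]
  · rw [cpl_offdiag ρ i s e he hz, zero_mul]

lemma cpl_dis_le (ρ : ℝ) (hρ0 : 0 < ρ) (i : Fin n) (s : Fin n → Bool) (e : Edge n r) :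
    ∑ z : Bool × Bool, cpl ρ i s e z.1 z.2 * ind (z.1 ≠ z.2) ≤ ρ / 2 := by
  by_cases he : i ∈ e.1
  · rw [Fintype.sum_prod_type, Fintype.sum_bool, Fintype.sum_bool, Fintype.sum_bool]
    have hgap := pE_gap ρ hρ0 i s e he
    simp only [cpl, he, if_true, ind]
    norm_num
    linarith
  · rw [cpl_dis_zero ρ i s e he]; positivity

lemma sum_prod_swap {ι : Type*} [Fintype ι] [DecidableEq ι] {κ : Type*} [Fintype κ]
    (F : ι → κ → ℝ) :
    ∑ G : ι → κ, ∏ e, F e (G e) = ∏ e, ∑ b, F e b := by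
  rw [Finset.prod_univ_sum, Fintype.piFinset_univ]

/-- The coupling weight. -/
def W (n r : ℕ) (ρ : ℝ) (i : Fin n) (p : HG n r × HG n r) : ℝ :=
  (2 / 2 ^ n) * ∑ s : Fin n → Bool, ind (s i = true) * ∏ e, cpl ρ i s e (p.1 e) (p.2 e)

lemma W_nonneg (ρ : ℝ) (hρ0 : 0 < ρ) (i : Fin n) (p : HG n r × HG n r) :
    0 ≤ W n r ρ i p := by
  unfold W
  apply mul_nonneg (by positivity)
  refine Finset.sum_nonneg fun s _ => mul_nonneg (ind_nonneg _)
    (Finset.prod_nonneg fun e _ => cpl_nonneg ρ hρ0 i s e _ _)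

lemma W_margin_right (ρ : ℝ) (i : Fin n) (Gx : HG n r) :
    ∑ Gy : HG n r, W n r ρ i (Gx, Gy) = mixPMF n r ρ i true Gx := by
  unfold W mixPMF
  rw [← Finset.mul_sum]
  congr 1
  rw [Finset.sum_comm]
  refine Finset.sum_congr rfl fun s _ => ?_
  rw [← Finset.mul_sum]
  congr 1
  rw [sum_prod_swap (fun e b => cpl ρ i s e (Gx e) b)]
  unfold hgWeight
  refine Finset.prod_congr rfl fun e _ => ?_
  rw [cpl_sum_right ρ i s e (Gx e)]
  cases hx : Gx e <;> simp [pE, hx]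

lemma flip_invol (i : Fin n) :
    Function.Involutive (fun s : Fin n → Bool => Function.update s i (!s i)) := by
  intro s
  funext j
  by_cases h : j = i
  · subst h; simp
  · simp [Function.update_of_ne h]

lemma W_margin_left (ρ : ℝ) (i : Fin n) (Gy : HG n r) :
    ∑ Gx : HG n r, W n r ρ i (Gx, Gy) = mixPMF n r ρ i false Gy := by
  unfold W mixPMF
  rw [← Finset.mul_sum]
  congr 1
  rw [Finset.sum_comm]
  have step1 : ∀ s : Fin n → Bool,
      ∑ Gx : HG n r, ind (s i = true) * ∏ e, cpl ρ i s e (Gx e) (Gy e)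
        = ind (s i = true) * hgWeight (fun j => ρ * signVec (flp i s) j) Gy := by
    intro s
    rw [← Finset.mul_sum]
    congr 1
    rw [sum_prod_swap (fun e x => cpl ρ i s e x (Gy e))]
    unfold hgWeight
    refine Finset.prod_congr rfl fun e _ => ?_
    rw [cpl_sum_left ρ i s e (Gy e)]
    cases hy : Gy e <;> simp [pE, hy]
  rw [Finset.sum_congr rfl fun s _ => step1 s]
  rw [← Equiv.sum_comp ((flip_invol i).toPerm _)
      (fun s => ind (s i = false) * hgWeight (fun j => ρ * signVec s j) Gy)]
  refine Finset.sum_congr rfl fun s _ => ?_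
  simp only [Function.Involutive.coe_toPerm]
  rw [Function.update_self]
  cases hsi : s i
  · simp [ind, hsi]
  · have hupd : Function.update s i (!true) = flp i s := by
      unfold flp; norm_num
    rw [hupd]
    simp [ind]

lemma W_support (ρ : ℝ) (i : Fin n) (p : HG n r × HG n r) (hW : W n r ρ i p ≠ 0)
    (e : Edge n r) (he : i ∉ e.1) : p.1 e = p.2 e := by
  by_contra hne
  apply hW
  unfold W
  rw [mul_eq_zero]; right
  refine Finset.sum_eq_zero fun s _ => ?_
  rw [mul_eq_zero]; right
  exact Finset.prod_eq_zero (Finset.mem_univ e) (cpl_offdiag ρ i s e he hne)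

lemma card_edges (i : Fin n) :
    ((univ : Finset (Edge n r)).filter fun e => i ∈ e.1).card ≤ (n-1).choose (r-1) := by
  have key : ((univ : Finset (Edge n r)).filter fun e => i ∈ e.1).card
      ≤ (((univ : Finset (Fin n)).erase i).powersetCard (r-1)).card := by
    apply Finset.card_le_card_of_injOn (fun e : Edge n r => e.1.erase i)
    · intro e he
      rw [Finset.mem_coe, Finset.mem_filter] at he
      rw [Finset.mem_coe, Finset.mem_powersetCard]
      refine ⟨Finset.erase_subset_erase i (Finset.subset_univ _), ?_⟩
      rw [Finset.card_erase_of_mem he.2, e.2]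
    · intro e he f hf hef
      rw [Finset.mem_coe, Finset.mem_filter] at he hf
      apply Subtype.ext
      rw [← Finset.insert_erase he.2, ← Finset.insert_erase hf.2]
      exact congrArg (insert i) hef
  rwa [Finset.card_powersetCard, Finset.card_erase_of_mem (Finset.mem_univ i),
    Finset.card_univ, Fintype.card_fin] at key

lemma sum_ind (i : Fin n) : ∑ s : Fin n → Bool, ind (s i = true) = 2 ^ n / 2 := by
  have h1 : ∑ s : Fin n → Bool, ind (s i = true)
      = ∑ s : Fin n → Bool, ind (s i = false) := by
    rw [← Equiv.sum_comp ((flip_invol i).toPerm _)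
        (fun s : Fin n → Bool => ind (s i = false))]
    refine Finset.sum_congr rfl fun s _ => ?_
    simp only [Function.Involutive.coe_toPerm]
    rw [Function.update_self]
    cases hsi : s i <;> simp [ind, hsi]
  have h2 : ∑ s : Fin n → Bool, (ind (s i = true) + ind (s i = false)) = 2 ^ n := by
    have h : ∀ s : Fin n → Bool, ind (s i = true) + ind (s i = false) = 1 := by
      intro s; cases hsi : s i <;> simp [ind, hsi]
    rw [Finset.sum_congr rfl fun s _ => h s]
    rw [Finset.sum_const, Finset.card_univ, nsmul_eq_mul, mul_one]
    norm_num [Fintype.card_fun]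
  rw [Finset.sum_add_distrib] at h2
  linarith

lemma cast_ham (Gx Gy : HG n r) : ((hamHG Gx Gy : ℕ) : ℝ) = ∑ e, ind (Gx e ≠ Gy e) := by
  unfold hamHG
  rw [Finset.card_filter, Nat.cast_sum]
  refine Finset.sum_congr rfl fun e _ => ?_
  by_cases h : Gx e ≠ Gy e <;> simp [ind, h]

lemma exp_inner (ρ : ℝ) (hρ0 : 0 < ρ) (i : Fin n) (s : Fin n → Bool) :
    ∑ p : HG n r × HG n r, (∏ e, cpl ρ i s e (p.1 e) (p.2 e)) * (hamHG p.1 p.2 : ℝ)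
      ≤ ((n-1).choose (r-1) : ℝ) * (ρ / 2) := by
  have e1 : ∑ p : HG n r × HG n r, (∏ e, cpl ρ i s e (p.1 e) (p.2 e)) * (hamHG p.1 p.2 : ℝ)
      = ∑ h : Edge n r → Bool × Bool,
          (∏ e, cpl ρ i s e (h e).1 (h e).2) * ∑ e, ind ((h e).1 ≠ (h e).2) := by
    rw [← Equiv.sum_comp (Equiv.arrowProdEquivProdArrow (Edge n r) (fun _ => Bool) (fun _ => Bool))
        (fun p : HG n r × HG n r =>
          (∏ e, cpl ρ i s e (p.1 e) (p.2 e)) * (hamHG p.1 p.2 : ℝ))]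
    refine Finset.sum_congr rfl fun h _ => ?_
    rw [cast_ham]
    rfl
  rw [e1]
  have e2 : ∀ h : Edge n r → Bool × Bool,
      (∏ e, cpl ρ i s e (h e).1 (h e).2) * ∑ e, ind ((h e).1 ≠ (h e).2)
        = ∑ e : Edge n r, ∏ f,
            (cpl ρ i s f (h f).1 (h f).2 * (if f = e then ind ((h f).1 ≠ (h f).2) else 1)) := by
    intro h
    rw [Finset.mul_sum]
    refine Finset.sum_congr rfl fun e _ => ?_
    rw [Finset.prod_mul_distrib]
    congr 1
    rw [Finset.prod_ite_eq' Finset.univ e (fun f => ind ((h f).1 ≠ (h f).2))]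
    simp
  rw [Finset.sum_congr rfl fun h _ => e2 h, Finset.sum_comm]
  have e3 : ∀ e : Edge n r,
      ∑ h : Edge n r → Bool × Bool, ∏ f,
          (cpl ρ i s f (h f).1 (h f).2 * (if f = e then ind ((h f).1 ≠ (h f).2) else 1))
        = ∑ z : Bool × Bool, cpl ρ i s e z.1 z.2 * ind (z.1 ≠ z.2) := by
    intro e
    rw [sum_prod_swap (fun f (z : Bool × Bool) =>
      cpl ρ i s f z.1 z.2 * (if f = e then ind (z.1 ≠ z.2) else 1))]
    have hfac : ∀ f : Edge n r,
        (∑ z : Bool × Bool, cpl ρ i s f z.1 z.2 * (if f = e then ind (z.1 ≠ z.2) else 1))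
          = if f = e then (∑ z : Bool × Bool, cpl ρ i s e z.1 z.2 * ind (z.1 ≠ z.2)) else 1 := by
      intro f
      by_cases hf : f = e
      · subst hf; simp
      · simp [hf, cpl_total ρ i s f]
    rw [Finset.prod_congr rfl fun f _ => hfac f]
    rw [Finset.prod_ite_eq' Finset.univ e
      (fun _ => ∑ z : Bool × Bool, cpl ρ i s e z.1 z.2 * ind (z.1 ≠ z.2))]
    simp
  rw [Finset.sum_congr rfl fun e _ => e3 e]
  calc ∑ e : Edge n r, ∑ z : Bool × Bool, cpl ρ i s e z.1 z.2 * ind (z.1 ≠ z.2)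
      ≤ ∑ e : Edge n r, (if i ∈ e.1 then ρ/2 else 0) := by
        refine Finset.sum_le_sum fun e _ => ?_
        by_cases he : i ∈ e.1
        · rw [if_pos he]; exact cpl_dis_le ρ hρ0 i s e
        · rw [if_neg he, cpl_dis_zero ρ i s e he]
    _ = ((univ.filter fun e : Edge n r => i ∈ e.1).card : ℝ) * (ρ/2) := by
        rw [← Finset.sum_filter, Finset.sum_const, nsmul_eq_mul]
    _ ≤ ((n-1).choose (r-1) : ℝ) * (ρ/2) := by
        apply mul_le_mul_of_nonneg_right _ (by positivity)
        exact_mod_cast card_edges i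

end S18

/-- There is a coupling of `P_{+i}` and `P_{−i}` that only disagrees on
hyperedges containing `i` and whose expected Hamming distance is at most
`(n−1 choose r−1)·ρ/2`. -/
theorem stmt18 (n r : ℕ) (hr : 2 ≤ r) (hn : r ≤ n) (M : ℝ) (hM : 0 < M)
    (i : Fin n) (ρ : ℝ) (hρ0 : 0 < ρ) (hρM : ρ ≤ M) :
    ∃ w : HG n r × HG n r → ℝ,
      (∀ p, 0 ≤ w p) ∧
      (∀ Gx : HG n r, ∑ Gy : HG n r, w (Gx, Gy) = mixPMF n r ρ i true Gx) ∧
      (∀ Gy : HG n r, ∑ Gx : HG n r, w (Gx, Gy) = mixPMF n r ρ i false Gy) ∧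
      (∀ p : HG n r × HG n r, w p ≠ 0 → ∀ e : Edge n r, i ∉ e.1 → p.1 e = p.2 e) ∧
      (∑ p : HG n r × HG n r, w p * (hamHG p.1 p.2 : ℝ) ≤
        ((n - 1).choose (r - 1) : ℝ) * ρ / 2) := by
  refine ⟨S18.W n r ρ i, fun p => S18.W_nonneg ρ hρ0 i p, S18.W_margin_right ρ i,
    S18.W_margin_left ρ i, fun p hp e he => S18.W_support ρ i p hp e he, ?_⟩
  have hterm : ∀ p : HG n r × HG n r, S18.W n r ρ i p * (hamHG p.1 p.2 : ℝ)
      = (2/2^n) * ∑ s : Fin n → Bool, ind (s i = true) *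
          ((∏ e, S18.cpl ρ i s e (p.1 e) (p.2 e)) * (hamHG p.1 p.2 : ℝ)) := by
    intro p
    unfold S18.W
    rw [mul_assoc, Finset.sum_mul]
    congr 1
    exact Finset.sum_congr rfl fun s _ => by ring
  rw [Finset.sum_congr rfl fun p _ => hterm p, ← Finset.mul_sum, Finset.sum_comm]
  have hswap : ∀ s : Fin n → Bool,
      ∑ p : HG n r × HG n r, ind (s i = true) *
          ((∏ e, S18.cpl ρ i s e (p.1 e) (p.2 e)) * (hamHG p.1 p.2 : ℝ))
        = ind (s i = true) * ∑ p : HG n r × HG n r,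
            (∏ e, S18.cpl ρ i s e (p.1 e) (p.2 e)) * (hamHG p.1 p.2 : ℝ) := by
    intro s; rw [Finset.mul_sum]
  rw [Finset.sum_congr rfl fun s _ => hswap s]
  have hbound : ∑ s : Fin n → Bool, ind (s i = true) *
        ∑ p : HG n r × HG n r, (∏ e, S18.cpl ρ i s e (p.1 e) (p.2 e)) * (hamHG p.1 p.2 : ℝ)
      ≤ (2^n/2) * (((n-1).choose (r-1) : ℝ) * (ρ/2)) := by
    calc ∑ s : Fin n → Bool, ind (s i = true) *
          ∑ p : HG n r × HG n r, (∏ e, S18.cpl ρ i s e (p.1 e) (p.2 e)) * (hamHG p.1 p.2 : ℝ)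
        ≤ ∑ s : Fin n → Bool, ind (s i = true) * (((n-1).choose (r-1) : ℝ) * (ρ/2)) :=
          Finset.sum_le_sum fun s _ =>
            mul_le_mul_of_nonneg_left (S18.exp_inner ρ hρ0 i s) (S18.ind_nonneg _)
      _ = (∑ s : Fin n → Bool, ind (s i = true)) * (((n-1).choose (r-1) : ℝ) * (ρ/2)) := by
          rw [← Finset.sum_mul]
      _ = (2^n/2) * (((n-1).choose (r-1) : ℝ) * (ρ/2)) := by rw [S18.sum_ind]
  have h2n : (0:ℝ) < 2 ^ n := by positivity
  calc (2/2^n : ℝ) * ∑ s : Fin n → Bool, ind (s i = true) *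
        ∑ p : HG n r × HG n r, (∏ e, S18.cpl ρ i s e (p.1 e) (p.2 e)) * (hamHG p.1 p.2 : ℝ)
      ≤ (2/2^n) * ((2^n/2) * (((n-1).choose (r-1) : ℝ) * (ρ/2))) :=
        mul_le_mul_of_nonneg_left hbound (by positivity)
    _ = ((n-1).choose (r-1) : ℝ) * ρ / 2 := by
        field_simp
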